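/- With the construction of the previous context (vertex set V' ∪ E ∪ {p}, local score f_v(E_v ∪ {p}) = 1 for v ∈ V' and all other parent-set scores 0), the maximum score of a polytree on V' ∪ E ∪ {p} in which every node's parent set is either empty or equal to E_v ∪ {p} equals the maximum size of an independent set of G. -/

import Mathlib

/-- The skeleton (underlying undirected graph) of the directed graph built from
a graph `G` and a vertex subset `I`: nodes are the vertices of `G`, the edges
of `G`, and one extra node `p`; each `v ∈ I` has parent set `E_v ∪ {p}` (all
incident edge nodes together with `p`), all other nodes have no parents. -/
def ptSkeleton {V : Type*} (G : SimpleGraph V) (I : Set V) :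
    SimpleGraph (V ⊕ (G.edgeSet ⊕ Unit)) :=
  SimpleGraph.fromRel (fun a b =>
    match a, b with
    | Sum.inr (Sum.inl e), Sum.inl v => v ∈ I ∧ v ∈ (e : Sym2 V)
    | Sum.inr (Sum.inr _), Sum.inl v => v ∈ I
    | _, _ => False)

open SimpleGraph in
/-- In a cycle, the base point has two distinct neighbors on the cycle. -/
lemma cycle_two_nbrs {W : Type*} {H : SimpleGraph W} {d : W} {c : H.Walk d d}
    (hc : c.IsCycle) :
    ∃ x y, x ≠ y ∧ H.Adj d x ∧ H.Adj d y ∧ x ∈ c.support ∧ y ∈ c.support := by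
  cases c with
  | nil => exact absurd hc Walk.IsCycle.not_of_nil
  | @cons _ b _ h w =>
    have hwn : ¬ w.Nil := by
      intro hn
      exact H.irrefl (Walk.eq_of_length_eq_zero (Walk.nil_iff_length_eq.mp hn) ▸ h)
    have hrn : ¬ w.reverse.Nil := by
      rw [Walk.nil_iff_length_eq] at *
      simpa using hwn
    obtain ⟨y, hadj', q, hq⟩ := Walk.not_nil_iff.mp hrn
    have hymem : y ∈ w.support := by
      have : y ∈ w.reverse.support := by rw [hq]; simp
      simpa [Walk.support_reverse] using this
    have hedge : s(d, y) ∈ w.edges := by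
      have : s(d, y) ∈ w.reverse.edges := by rw [hq]; simp
      simpa [Walk.edges_reverse] using this
    have htrail : (s(d, b) :: w.edges).Nodup := by
      simpa [Walk.edges_cons] using hc.isTrail.edges_nodup
    have hfst : s(d, b) ∉ w.edges := (List.nodup_cons.mp htrail).1
    refine ⟨b, y, ?_, h, hadj', by simp, by simp [hymem]⟩
    rintro rfl
    exact hfst hedge

open SimpleGraph in
lemma ptSkeleton_acyclic_iff {V : Type*} (G : SimpleGraph V) (I : Set V) :
    (ptSkeleton G I).IsAcyclic ↔ ∀ u ∈ I, ∀ v ∈ I, ¬ G.Adj u v := by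
  constructor
  · -- acyclic → independent
    intro hac u hu v hv huv
    have hne : u ≠ v := G.ne_of_adj huv
    set e : G.edgeSet := ⟨s(u, v), huv⟩ with he
    -- build a 4-cycle
    have a1 : (ptSkeleton G I).Adj (Sum.inl u) (Sum.inr (Sum.inr ())) := by
      simp [ptSkeleton, SimpleGraph.fromRel_adj, hu]
    have a2 : (ptSkeleton G I).Adj (Sum.inr (Sum.inr ())) (Sum.inl v) := by
      simp [ptSkeleton, SimpleGraph.fromRel_adj, hv]
    have a3 : (ptSkeleton G I).Adj (Sum.inl v) (Sum.inr (Sum.inl e)) := by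
      simp [ptSkeleton, SimpleGraph.fromRel_adj, hv, he, Sym2.mem_iff]
    have a4 : (ptSkeleton G I).Adj (Sum.inr (Sum.inl e)) (Sum.inl u) := by
      simp [ptSkeleton, SimpleGraph.fromRel_adj, hu, he, Sym2.mem_iff]
    let c : (ptSkeleton G I).Walk (Sum.inl u) (Sum.inl u) :=
      Walk.cons a1 (Walk.cons a2 (Walk.cons a3 (Walk.cons a4 Walk.nil)))
    refine hac c ?_
    constructor
    · constructor
      · constructor
        simp only [c, Walk.edges_cons, Walk.edges_nil, List.nodup_cons, List.mem_cons,
          List.mem_singleton, List.not_mem_nil, not_false_iff, and_true, List.nodup_nil]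
        refine ⟨?_, ?_, ?_⟩ <;> simp [Sym2.eq, Sym2.rel_iff', hne, hne.symm]
      · simp [c]
    · simp [c, hne, hne.symm]
  · -- independent → acyclic
    intro hind
    intro a c hc
    classical
    -- First, no edge-node can be in the support of the cycle.
    have noedge : ∀ (e : G.edgeSet), Sum.inr (Sum.inl e) ∉ c.support := by
      intro e hmem
      have hc' := hc.rotate hmem
      obtain ⟨x, y, hxy, hx, hy, _, _⟩ := cycle_two_nbrs hc'
      -- neighbors of an edge node are vertices of I contained in e
      have hx' : ∃ u, x = Sum.inl u ∧ u ∈ I ∧ u ∈ (e : Sym2 V) := by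
        rw [ptSkeleton, SimpleGraph.fromRel_adj] at hx
        rcases x with u | (f | t)
        · exact ⟨u, rfl, by tauto⟩
        · simp [ptSkeleton] at hx
        · simp [ptSkeleton] at hx
      have hy' : ∃ u, y = Sum.inl u ∧ u ∈ I ∧ u ∈ (e : Sym2 V) := by
        rw [ptSkeleton, SimpleGraph.fromRel_adj] at hy
        rcases y with u | (f | t)
        · exact ⟨u, rfl, by tauto⟩
        · simp [ptSkeleton] at hy
        · simp [ptSkeleton] at hy
      obtain ⟨u, rfl, hu, hue⟩ := hx'
      obtain ⟨w, rfl, hw, hwe⟩ := hy'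
      have hne : u ≠ w := fun h => hxy (by rw [h])
      have heq : (e : Sym2 V) = s(u, w) := (Sym2.mem_and_mem_iff hne).mp ⟨hue, hwe⟩
      have : G.Adj u w := by rw [← SimpleGraph.mem_edgeSet, ← heq]; exact e.2
      exact hind u hu w hw this
    -- the cycle has some vertex node in support
    have hcn : ¬ c.Nil := hc.not_nil
    obtain ⟨b, hab, q, hq⟩ := Walk.not_nil_iff.mp hcn
    have hbmem : b ∈ c.support := by rw [hq]; simp
    have hamem : a ∈ c.support := c.start_mem_support
    have hinl : ∃ u, Sum.inl u ∈ c.support := by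
      rw [ptSkeleton, SimpleGraph.fromRel_adj] at hab
      rcases hab with ⟨_, hr | hr⟩
      · rcases b with u | (f | t)
        · exact ⟨u, hbmem⟩
        · simp at hr
        · simp at hr
      · rcases a with u | (f | t)
        · exact ⟨u, hamem⟩
        · simp at hr
        · simp at hr
    obtain ⟨u, humem⟩ := hinl
    have hc' := hc.rotate humem
    obtain ⟨x, y, hxy, hx, hy, hxs, hys⟩ := cycle_two_nbrs hc'
    have hsub : ∀ z, z ∈ (c.rotate _ humem).support → z ∈ c.support := by
      intro z hz
      have hperm := c.support_rotate _ humem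
      rw [(c.rotate _ humem).support_eq_cons] at hz
      rcases List.mem_cons.mp hz with rfl | hz
      · exact humem
      · have : z ∈ c.support.tail := hperm.mem_iff.mp hz
        rw [c.support_eq_cons]
        exact List.mem_cons_of_mem _ this
    have hchar : ∀ z, (ptSkeleton G I).Adj (Sum.inl u) z →
        (∃ e : G.edgeSet, z = Sum.inr (Sum.inl e)) ∨ z = Sum.inr (Sum.inr ()) := by
      intro z hz
      rw [ptSkeleton, SimpleGraph.fromRel_adj] at hz
      rcases z with w | (f | t)
      · simp [ptSkeleton] at hz
      · exact Or.inl ⟨f, rfl⟩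
      · exact Or.inr (by cases t; rfl)
    have hxp : x = Sum.inr (Sum.inr ()) := by
      rcases hchar x hx with ⟨e, rfl⟩ | h
      · exact absurd (hsub _ hxs) (noedge e)
      · exact h
    have hyp : y = Sum.inr (Sum.inr ()) := by
      rcases hchar y hy with ⟨e, rfl⟩ | h
      · exact absurd (hsub _ hys) (noedge e)
      · exact h
    exact hxy (hxp.trans hyp.symm)

/-- In the constructed instance (scores: `f_v(E_v ∪ {p}) = 1` for `v ∈ V'`, all
other parent sets score `0`), a reasonable polytree is determined by the set
`I` of nodes with non-empty parent set, its structure is a polytree iff its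
skeleton is acyclic, and its score is `|I|`.  The maximum score of a
reasonable polytree equals the maximum size of an independent set of `G`. -/
theorem stmt_7 {V : Type*} [Fintype V] (G : SimpleGraph V) :
    sSup {m : ℕ | ∃ I : Finset V, (ptSkeleton G (I : Set V)).IsAcyclic ∧ m = I.card}
      = sSup {m : ℕ | ∃ I : Finset V, (∀ u ∈ I, ∀ v ∈ I, ¬ G.Adj u v) ∧ m = I.card} := by
  congr 1
  ext m
  simp only [Set.mem_setOf_eq]
  constructor
  · rintro ⟨I, hac, rfl⟩
    refine ⟨I, ?_, rfl⟩
    have := (ptSkeleton_acyclic_iff G (I : Set V)).mp hac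
    intro u hu v hv
    exact this u (by simpa) v (by simpa)
  · rintro ⟨I, hind, rfl⟩
    refine ⟨I, ?_, rfl⟩
    rw [ptSkeleton_acyclic_iff]
    intro u hu v hv
    exact hind u (by simpa using hu) v (by simpa using hv)
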